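/- Let G_i^s be the Gaussian diagonal estimator of the i-th diagonal entry of A ∈ ℝ^{n×n} using s independent standard Gaussian query vectors. For ε ∈ (0,1], if s > 4 log₂(√2/δ)/ε², then P(|G_i^s − A_{ii}|² ≤ ε²(‖A_i‖₂² − A_{ii}²)) ≥ 1 − δ. -/

import Mathlib

open MeasureTheory ProbabilityTheory Matrix
open Real ENNReal


lemma gde_lintegral_gauss (f : ℝ → ℝ) (hf : Measurable f) :
    ∫⁻ x, ENNReal.ofReal (f x) ∂(gaussianReal 0 1) =
      ∫⁻ x, ENNReal.ofReal (gaussianPDFReal 0 1 x * f x) := by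
  rw [gaussianReal_of_var_ne_zero 0 one_ne_zero,
    lintegral_withDensity_eq_lintegral_mul _ (measurable_gaussianPDF 0 1)
      (g := fun x => ENNReal.ofReal (f x)) (by fun_prop)]
  congr 1
  ext x
  simp only [Pi.mul_apply, gaussianPDF]
  rw [← ENNReal.ofReal_mul (gaussianPDFReal_nonneg 0 1 x)]

lemma gde_mgf_gauss (b : ℝ) :
    ∫⁻ x, ENNReal.ofReal (Real.exp (b * x)) ∂(gaussianReal 0 1) =
      ENNReal.ofReal (Real.exp (b ^ 2 / 2)) := by
  rw [gde_lintegral_gauss _ (by fun_prop)]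
  have key : ∀ x : ℝ, gaussianPDFReal 0 1 x * Real.exp (b * x)
      = Real.exp (b ^ 2 / 2) * gaussianPDFReal b 1 x := by
    intro x
    simp only [gaussianPDFReal_def, NNReal.coe_one, mul_one, sub_zero]
    rw [mul_comm (Real.exp (b^2/2)), mul_assoc, mul_assoc, ← Real.exp_add, ← Real.exp_add]
    congr 1
    congr 1
    ring
  simp_rw [key, ENNReal.ofReal_mul (Real.exp_pos _).le]
  rw [lintegral_const_mul _ (by
    have := measurable_gaussianPDF b 1
    exact (measurable_gaussianPDFReal b 1).ennreal_ofReal)]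
  have : ∫⁻ x, ENNReal.ofReal (gaussianPDFReal b 1 x) = 1 := by
    simpa [gaussianPDF] using lintegral_gaussianPDF_eq_one b one_ne_zero
  rw [this, mul_one]

lemma gde_laplace_sq_gauss (a : ℝ) (ha : 0 ≤ a) :
    ∫⁻ x, ENNReal.ofReal (Real.exp (-(a * x ^ 2))) ∂(gaussianReal 0 1) =
      ENNReal.ofReal (Real.sqrt ((1 + 2 * a)⁻¹)) := by
  have h12 : (0:ℝ) < 1 + 2 * a := by linarith
  set vr : ℝ := (1 + 2 * a)⁻¹ with hvr
  have hvrpos : 0 < vr := inv_pos.mpr h12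
  set v : NNReal := ⟨vr, hvrpos.le⟩ with hv
  have hvne : v ≠ 0 := by
    rw [← NNReal.coe_ne_zero]
    simp only [hv, NNReal.coe_mk]
    positivity
  have hsvr : Real.sqrt vr ≠ 0 := ne_of_gt (Real.sqrt_pos.mpr hvrpos)
  rw [gde_lintegral_gauss _ (by fun_prop)]
  have key : ∀ x : ℝ, gaussianPDFReal 0 1 x * Real.exp (-(a * x ^ 2))
      = Real.sqrt vr * gaussianPDFReal 0 v x := by
    intro x
    have h1 : Real.sqrt (2 * π * vr) = Real.sqrt (2 * π) * Real.sqrt vr :=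
      Real.sqrt_mul (by positivity) _
    calc gaussianPDFReal 0 1 x * Real.exp (-(a * x ^ 2))
        = (Real.sqrt (2 * π))⁻¹ * Real.exp (-x ^ 2 / (2 * vr)) := by
          simp only [gaussianPDFReal_def, NNReal.coe_one, mul_one, sub_zero]
          rw [mul_assoc, ← Real.exp_add]
          congr 1
          rw [hvr]
          field_simp
          ring
      _ = Real.sqrt vr * gaussianPDFReal 0 v x := by
          rw [show gaussianPDFReal 0 v x = (√(2 * π * vr))⁻¹ * rexp (-(x - 0) ^ 2 / (2 * vr)) from rfl]
          simp only [gaussianPDFReal_def, NNReal.coe_mk, sub_zero, hv]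
          rw [h1, ← mul_assoc]
          congr 1
          rw [mul_inv, mul_comm ((Real.sqrt (2*π))⁻¹) ((Real.sqrt vr)⁻¹), ← mul_assoc,
            mul_inv_cancel₀ hsvr, one_mul]
  simp_rw [key, ENNReal.ofReal_mul (Real.sqrt_nonneg _)]
  rw [lintegral_const_mul _ (by
    have := measurable_gaussianPDF 0 v
    exact (measurable_gaussianPDFReal 0 v).ennreal_ofReal)]
  have : ∫⁻ x, ENNReal.ofReal (gaussianPDFReal 0 v x) = 1 := by
    simpa [gaussianPDF] using lintegral_gaussianPDF_eq_one 0 hvne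
  rw [this, mul_one]
lemma gde_lintegral_fin_pi_prod {μ : Measure ℝ} [IsProbabilityMeasure μ] :
    ∀ (m : ℕ) (f : Fin m → ℝ → ℝ≥0∞), (∀ i, Measurable (f i)) →
    ∫⁻ z, ∏ i, f i (z i) ∂(Measure.pi fun _ : Fin m => μ) = ∏ i, ∫⁻ x, f i x ∂μ := by
  intro m
  induction m with
  | zero =>
    intro f hf
    simp only [Finset.univ_eq_empty, Finset.prod_empty, lintegral_one, measure_univ]
  | succ m ih =>
    intro f hf
    have hMP := measurePreserving_piFinSuccAbove (fun _ : Fin (m+1) => μ) 0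
    have hmeas : Measurable fun (y : ℝ × (Fin m → ℝ)) =>
        f 0 y.1 * ∏ i : Fin m, f i.succ (y.2 i) := by
      apply Measurable.mul
      · exact (hf 0).comp measurable_fst
      · apply Finset.measurable_prod
        intro i _
        exact (hf i.succ).comp ((measurable_pi_apply i).comp measurable_snd)
    calc ∫⁻ z, ∏ i, f i (z i) ∂(Measure.pi fun _ : Fin (m+1) => μ)
        = ∫⁻ y, f 0 y.1 * ∏ i : Fin m, f i.succ (y.2 i)
            ∂(μ.prod (Measure.pi fun _ : Fin m => μ)) := by
          rw [← hMP.lintegral_comp hmeas]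
          congr 1
          ext z
          simp only [MeasurableEquiv.piFinSuccAbove_apply, Fin.insertNthEquiv,
            Equiv.coe_fn_symm_mk]
          rw [Fin.prod_univ_succ]
          congr 1
      _ = (∫⁻ x, f 0 x ∂μ) * ∫⁻ y, ∏ i : Fin m, f i.succ (y i)
            ∂(Measure.pi fun _ : Fin m => μ) := by
          rw [lintegral_prod_mul (f := f 0) (g := fun y : Fin m → ℝ => ∏ i : Fin m, f i.succ (y i))
            ((hf 0).aemeasurable)
            (show Measurable fun y : Fin m → ℝ => ∏ i : Fin m, f i.succ (y i) from
              Finset.measurable_prod _ (fun i _ =>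
                (hf i.succ).comp (measurable_pi_apply i))).aemeasurable]
      _ = ∏ i, ∫⁻ x, f i x ∂μ := by
          rw [ih _ (fun i => hf i.succ), Fin.prod_univ_succ]

lemma gde_lintegral_pi_prod {ι : Type*} [Fintype ι] {μ : Measure ℝ} [IsProbabilityMeasure μ]
    (f : ι → ℝ → ℝ≥0∞) (hf : ∀ i, Measurable (f i)) :
    ∫⁻ z, ∏ i, f i (z i) ∂(Measure.pi fun _ : ι => μ) = ∏ i, ∫⁻ x, f i x ∂μ := by
  let e := (Fintype.equivFin ι).symm
  have hMP : MeasurePreserving (MeasurableEquiv.piCongrLeft (fun _ : ι => ℝ) e)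
      (Measure.pi fun _ => μ) (Measure.pi fun _ : ι => μ) :=
    measurePreserving_piCongrLeft (fun _ : ι => μ) e
  rw [← hMP.lintegral_comp (f := fun z : ι → ℝ => ∏ i, f i (z i))
    (show Measurable fun z : ι → ℝ => ∏ i, f i (z i) from
      Finset.measurable_prod _ (fun i _ => (hf i).comp (measurable_pi_apply i)))]
  have : ∀ z : Fin (Fintype.card ι) → ℝ,
      (∏ i, f i ((MeasurableEquiv.piCongrLeft (fun _ : ι => ℝ) e) z i))
        = ∏ k, f (e k) (z k) := by
    intro z
    rw [← e.prod_comp]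
    apply Finset.prod_congr rfl
    intro k _
    congr 1
    simp [MeasurableEquiv.coe_piCongrLeft, Equiv.piCongrLeft_apply_apply]
  simp_rw [this]
  rw [gde_lintegral_fin_pi_prod _ _ (fun k => hf (e k)), ← e.prod_comp]

lemma gde_chernoff_one {ι : Type*} [Fintype ι] (a : ι → ℝ) (t : ℝ) (ht : 0 < t)
    (hQ : 0 < ∑ p, a p ^ 2) :
    (Measure.pi fun _ : ι => gaussianReal 0 1) {z | t ≤ ∑ p, a p * z p} ≤
      ENNReal.ofReal (Real.exp (-t ^ 2 / (2 * ∑ p, a p ^ 2))) := by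
  set Q : ℝ := ∑ p, a p ^ 2 with hQdef
  set lam : ℝ := t / Q with hlam
  have hlampos : 0 < lam := div_pos ht hQ
  set μ : Measure (ι → ℝ) := Measure.pi fun _ : ι => gaussianReal 0 1 with hμ
  set f : (ι → ℝ) → ℝ≥0∞ := fun z => ENNReal.ofReal (Real.exp (lam * ∑ p, a p * z p)) with hf
  have hLmeas : Measurable fun z : ι → ℝ => ∑ p, a p * z p :=
    Finset.measurable_sum _ (fun p _ => (measurable_pi_apply p).const_mul _)
  have hfmeas : Measurable f := ENNReal.measurable_ofReal.comp (Real.measurable_exp.comp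
    (hLmeas.const_mul _))
  have hint : ∫⁻ z, f z ∂μ = ENNReal.ofReal (Real.exp (lam ^ 2 * Q / 2)) := by
    have hprod : ∀ z : ι → ℝ, f z = ∏ p, ENNReal.ofReal (Real.exp ((lam * a p) * z p)) := by
      intro z
      rw [hf]
      simp only
      rw [Finset.mul_sum, Real.exp_sum, ENNReal.ofReal_prod_of_nonneg
        (fun p _ => (Real.exp_pos _).le)]
      congr 1 with p
      ring_nf
    simp_rw [hprod]
    rw [gde_lintegral_pi_prod (fun p x => ENNReal.ofReal (Real.exp (lam * a p * x)))
      (fun p => by fun_prop)]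
    have : ∀ p : ι, ∫⁻ x, ENNReal.ofReal (Real.exp (lam * a p * x)) ∂(gaussianReal 0 1)
        = ENNReal.ofReal (Real.exp ((lam * a p) ^ 2 / 2)) := fun p => gde_mgf_gauss _
    simp_rw [this]
    rw [← ENNReal.ofReal_prod_of_nonneg (fun p _ => (Real.exp_pos _).le), ← Real.exp_sum]
    congr 2
    rw [← Finset.sum_div, hQdef, Finset.mul_sum]
    congr 1
    apply Finset.sum_congr rfl
    intro p _
    ring
  have hsub : {z : ι → ℝ | t ≤ ∑ p, a p * z p} ⊆
      {z | ENNReal.ofReal (Real.exp (lam * t)) ≤ f z} := by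
    intro z hz
    exact ENNReal.ofReal_le_ofReal (Real.exp_le_exp.mpr
      (mul_le_mul_of_nonneg_left hz hlampos.le))
  have hmarkov := mul_meas_ge_le_lintegral₀ (μ := μ) hfmeas.aemeasurable
    (ENNReal.ofReal (Real.exp (lam * t)))
  have h1 : μ {z | t ≤ ∑ p, a p * z p} ≤
      ENNReal.ofReal (Real.exp (lam ^ 2 * Q / 2)) / ENNReal.ofReal (Real.exp (lam * t)) := by
    refine le_trans (measure_mono hsub) ?_
    rw [ENNReal.le_div_iff_mul_le (Or.inl ?_) (Or.inl ENNReal.ofReal_ne_top)]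
    · rw [mul_comm]
      exact hmarkov.trans_eq hint
    · simp [Real.exp_pos]
  refine h1.trans_eq ?_
  rw [← ENNReal.ofReal_div_of_pos (Real.exp_pos _), ← Real.exp_sub]
  congr 1
  rw [hlam]
  field_simp
  ring

lemma gde_chernoff_abs {ι : Type*} [Fintype ι] (a : ι → ℝ) (t : ℝ) (ht : 0 < t)
    (hQ : 0 < ∑ p, a p ^ 2) :
    (Measure.pi fun _ : ι => gaussianReal 0 1) {z | t ≤ |∑ p, a p * z p|} ≤
      ENNReal.ofReal (2 * Real.exp (-t ^ 2 / (2 * ∑ p, a p ^ 2))) := by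
  set μ : Measure (ι → ℝ) := Measure.pi fun _ : ι => gaussianReal 0 1 with hμ
  have hsub : {z : ι → ℝ | t ≤ |∑ p, a p * z p|} ⊆
      {z | t ≤ ∑ p, a p * z p} ∪ {z | t ≤ ∑ p, (-a) p * z p} := by
    intro z hz
    simp only [Set.mem_setOf_eq] at hz ⊢
    rcases le_abs.mp hz with h | h
    · exact Or.inl h
    · refine Or.inr ?_
      simpa [Finset.sum_neg_distrib, neg_mul] using h
  have hQ' : 0 < ∑ p, (-a) p ^ 2 := by simpa using hQ
  calc μ {z | t ≤ |∑ p, a p * z p|}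
      ≤ μ {z | t ≤ ∑ p, a p * z p} + μ {z | t ≤ ∑ p, (-a) p * z p} :=
        le_trans (measure_mono hsub) (measure_union_le _ _)
    _ ≤ ENNReal.ofReal (Real.exp (-t ^ 2 / (2 * ∑ p, a p ^ 2)))
        + ENNReal.ofReal (Real.exp (-t ^ 2 / (2 * ∑ p, (-a) p ^ 2))) :=
        add_le_add (gde_chernoff_one a t ht hQ) (gde_chernoff_one (-a) t ht hQ')
    _ = ENNReal.ofReal (2 * Real.exp (-t ^ 2 / (2 * ∑ p, a p ^ 2))) := by
        have : ∑ p, (-a) p ^ 2 = ∑ p, a p ^ 2 := by simp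
        rw [this, ENNReal.ofReal_mul zero_le_two, ← two_mul]
        norm_num

lemma gde_numeric {s : ℕ} {ε δ : ℝ} (hε0 : 0 < ε) (hε1 : ε ≤ 1) (hδ0 : 0 < δ) (hδ1 : δ < 1)
    (hq : (s : ℝ) > 4 * Real.logb 2 (Real.sqrt 2 / δ) / ε ^ 2) :
    2 * Real.sqrt ((1 + ε ^ 2)⁻¹) ^ s ≤ δ := by
  have h1 : (0:ℝ) < 1 + ε ^ 2 := by positivity
  set r : ℝ := Real.sqrt ((1 + ε ^ 2)⁻¹) with hr
  have hrpos : 0 < r := Real.sqrt_pos.mpr (by positivity)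
  set L : ℝ := Real.log (1 + ε ^ 2) with hL
  have hlogr : Real.log r = -L / 2 := by
    rw [hr, Real.log_sqrt (by positivity), Real.log_inv]
  have hrs : r ^ s = Real.exp ((s : ℝ) * (-L / 2)) := by
    rw [← hlogr, ← Real.log_pow, Real.exp_log (pow_pos hrpos s)]
  have hlg2 : (0:ℝ) < Real.log 2 := Real.log_pos one_lt_two
  have hld : Real.log δ < 0 := Real.log_neg hδ0 hδ1
  -- L ≥ ε² log 2 via convexity of exp
  have hLlb : ε ^ 2 * Real.log 2 ≤ L := by
    have h2 : Real.exp (ε ^ 2 * Real.log 2) ≤ 1 + ε ^ 2 := by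
      have hw1 : (0:ℝ) ≤ 1 - ε ^ 2 := by nlinarith
      have hconv := convexOn_exp.2 (Set.mem_univ (0:ℝ)) (Set.mem_univ (Real.log 2))
        hw1 (by positivity : (0:ℝ) ≤ ε ^ 2) (by ring)
      simp only [smul_eq_mul, mul_zero, zero_add, Real.exp_zero, Real.exp_log two_pos]
        at hconv
      calc Real.exp (ε ^ 2 * Real.log 2) ≤ (1 - ε ^ 2) * 1 + ε ^ 2 * 2 := hconv
        _ = 1 + ε ^ 2 := by ring
    have h3 := Real.log_le_log (Real.exp_pos _) h2
    rwa [Real.log_exp] at h3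
  -- from the query bound
  have hlogX : Real.logb 2 (Real.sqrt 2 / δ) =
      (Real.log 2 / 2 - Real.log δ) / Real.log 2 := by
    rw [Real.logb, Real.log_div (by positivity) (ne_of_gt hδ0), Real.log_sqrt (by norm_num)]
  have hsε : (s : ℝ) * ε ^ 2 > 4 * (Real.log 2 / 2 - Real.log δ) / Real.log 2 := by
    have h4 : (s : ℝ) * ε ^ 2 > 4 * Real.logb 2 (Real.sqrt 2 / δ) := by
      have := (div_lt_iff₀ (by positivity : (0:ℝ) < ε ^ 2)).mp hq
      linarith
    rw [hlogX] at h4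
    linarith [show 4 * ((Real.log 2 / 2 - Real.log δ) / Real.log 2)
      = 4 * (Real.log 2 / 2 - Real.log δ) / Real.log 2 from by ring]
  -- conclude
  have hsL : 2 * Real.log 2 - 2 * Real.log δ ≤ (s : ℝ) * L := by
    have h5 : (s : ℝ) * (ε ^ 2 * Real.log 2) ≤ (s : ℝ) * L :=
      mul_le_mul_of_nonneg_left hLlb (Nat.cast_nonneg s)
    have h6 : 4 * (Real.log 2 / 2 - Real.log δ) / Real.log 2 * Real.log 2
        < (s : ℝ) * ε ^ 2 * Real.log 2 := by
      exact mul_lt_mul_of_pos_right hsε hlg2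
    rw [div_mul_cancel₀ _ (ne_of_gt hlg2)] at h6
    nlinarith
  have key : (s : ℝ) * (-L / 2) ≤ Real.log (δ / 2) := by
    rw [Real.log_div (ne_of_gt hδ0) (by norm_num)]
    nlinarith
  calc 2 * r ^ s = 2 * Real.exp ((s : ℝ) * (-L / 2)) := by rw [hrs]
    _ ≤ 2 * (δ / 2) := by
        have h7 := Real.exp_le_exp.mpr key
        rw [Real.exp_log (by positivity)] at h7
        linarith
    _ = δ := by ring

lemma gde_map_pi {T : Type*} [Fintype T] {Ω : Type*} [MeasureSpace Ω]
    [IsProbabilityMeasure (ℙ : Measure Ω)] (V : Ω → T → ℝ)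
    (hm : ∀ p, Measurable fun ω => V ω p)
    (hd : ∀ p, Measure.map (fun ω => V ω p) ℙ = gaussianReal 0 1)
    (hind : iIndepFun (fun p ω => V ω p) ℙ) :
    Measure.map V ℙ = Measure.pi fun _ : T => gaussianReal 0 1 := by
  refine (Measure.pi_eq fun sets hsets => ?_).symm
  rw [Measure.map_apply (measurable_pi_lambda _ hm) (MeasurableSet.univ_pi hsets)]
  have hpre : V ⁻¹' Set.univ.pi sets = ⋂ p ∈ Finset.univ, (fun ω => V ω p) ⁻¹' sets p := by
    ext ω
    simp [Set.mem_univ_pi]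
  rw [hpre, hind.measure_inter_preimage_eq_mul Finset.univ (fun p _ => hsets p)]
  refine Finset.prod_congr rfl fun p _ => ?_
  rw [← Measure.map_apply (hm p) (hsets p), hd p]

theorem gaussian_diagonal_estimator_element_bound
    {n s : ℕ} (hs : 0 < s) (A : Matrix (Fin n) (Fin n) ℝ) (i : Fin n)
    {Ω : Type*} [MeasureSpace Ω] [IsProbabilityMeasure (ℙ : Measure Ω)]
    (v : Ω → Fin s → Fin n → ℝ)
    (hmeas : ∀ k j, Measurable (fun ω => v ω k j))
    (hdist : ∀ k j, Measure.map (fun ω => v ω k j) ℙ = gaussianReal 0 1)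
    (hindep : iIndepFun
      (fun p : Fin s × Fin n => fun ω => v ω p.1 p.2) ℙ)
    (G : Ω → ℝ)
    (hG : G = fun ω => (∑ k, v ω k i * A.mulVec (v ω k) i) / (∑ k, (v ω k i) ^ 2))
    (ε δ : ℝ) (hε : ε ∈ Set.Ioc (0:ℝ) 1) (hδ : δ ∈ Set.Ioo (0:ℝ) 1)
    (hquery : (s : ℝ) > 4 * Real.logb 2 (Real.sqrt 2 / δ) / ε ^ 2) :
    ENNReal.ofReal (1 - δ) ≤
      ℙ {ω | |G ω - A i i| ^ 2 ≤ ε ^ 2 * ((∑ j, A i j ^ 2) - A i i ^ 2)} := by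
  classical
  obtain ⟨hε0, hε1⟩ := hε
  obtain ⟨hδ0, hδ1⟩ := hδ
  set c : ℝ := (∑ j, A i j ^ 2) - A i i ^ 2 with hc
  have hcerase : c = ∑ j ∈ Finset.univ.erase i, A i j ^ 2 := by
    rw [hc, Finset.sum_erase_eq_sub (Finset.mem_univ i)]
  have hcnonneg : 0 ≤ c := by
    rw [hcerase]
    exact Finset.sum_nonneg fun j _ => sq_nonneg _
  set μT : Measure ((Fin s × Fin n) → ℝ) := Measure.pi fun _ => gaussianReal 0 1 with hμT
  haveI hprobT : IsProbabilityMeasure μT := by rw [hμT]; infer_instance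
  set V : Ω → (Fin s × Fin n) → ℝ := fun ω p => v ω p.1 p.2 with hV
  have hVmeas : Measurable V := measurable_pi_lambda _ (fun p => hmeas p.1 p.2)
  have hmap : Measure.map V ℙ = μT :=
    gde_map_pi V (fun p => hmeas p.1 p.2) (fun p => hdist p.1 p.2) hindep
  set S : ((Fin s × Fin n) → ℝ) → ℝ := fun z => ∑ k, z (k, i) ^ 2 with hS
  set Num : ((Fin s × Fin n) → ℝ) → ℝ :=
    fun z => ∑ k, z (k, i) * ∑ j, A i j * z (k, j) with hNum
  set N : ((Fin s × Fin n) → ℝ) → ℝ :=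
    fun z => ∑ k, z (k, i) * ∑ j ∈ Finset.univ.erase i, A i j * z (k, j) with hN
  have hSmeas : Measurable S :=
    Finset.measurable_sum _ fun k _ => (measurable_pi_apply (k, i)).pow_const 2
  have hNummeas : Measurable Num :=
    Finset.measurable_sum _ fun k _ => (measurable_pi_apply (k, i)).mul
      (Finset.measurable_sum _ fun j _ => (measurable_pi_apply (X := fun _ => ℝ) (k, j)).const_mul (A i j))
  have hNmeas : Measurable N :=
    Finset.measurable_sum _ fun k _ => (measurable_pi_apply (k, i)).mul
      (Finset.measurable_sum _ fun j _ => (measurable_pi_apply (X := fun _ => ℝ) (k, j)).const_mul (A i j))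
  set E : Set ((Fin s × Fin n) → ℝ) := {z | |Num z / S z - A i i| ^ 2 ≤ ε ^ 2 * c} with hE
  have hEmeas : MeasurableSet E :=
    measurableSet_le (((hNummeas.div hSmeas).sub measurable_const).abs.pow_const 2)
      measurable_const
  have hPE : ℙ {ω | |G ω - A i i| ^ 2 ≤ ε ^ 2 * c} = μT E := by
    rw [← hmap, Measure.map_apply hVmeas hEmeas]
    congr 1
    ext ω
    subst hG
    simp only [hE, Set.mem_setOf_eq, Set.mem_preimage, hNum, hS, hV, Matrix.mulVec, dotProduct]
  rw [hPE]
  -- the bad sets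
  set k0 : Fin s := ⟨0, hs⟩ with hk0
  set B0 : Set ((Fin s × Fin n) → ℝ) := {z | z (k0, i) = 0} with hB0def
  set B1 : Set ((Fin s × Fin n) → ℝ) := {z | ε ^ 2 * c * S z ^ 2 < N z ^ 2} with hB1def
  have hB1meas : MeasurableSet B1 :=
    measurableSet_lt ((hSmeas.pow_const 2).const_mul _) (hNmeas.pow_const 2)
  have hsubset : Eᶜ ⊆ B0 ∪ B1 := by
    intro z hz
    simp only [hE, Set.mem_compl_iff, Set.mem_setOf_eq, not_le] at hz
    by_cases h0 : z (k0, i) = 0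
    · exact Or.inl h0
    · refine Or.inr ?_
      have hSpos : 0 < S z := by
        have h1 : z (k0, i) ^ 2 ≤ S z :=
          Finset.single_le_sum (f := fun k => z (k, i) ^ 2)
            (fun k _ => sq_nonneg _) (Finset.mem_univ k0)
        have h2 : 0 < z (k0, i) ^ 2 := by positivity
        linarith
      have hnum : Num z = A i i * S z + N z := by
        simp only [hNum, hN, hS]
        rw [Finset.mul_sum, ← Finset.sum_add_distrib]
        refine Finset.sum_congr rfl fun k _ => ?_
        have hj : ∑ j, A i j * z (k, j) =
            A i i * z (k, i) + ∑ j ∈ Finset.univ.erase i, A i j * z (k, j) :=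
          (Finset.add_sum_erase _ (fun j => A i j * z (k, j)) (Finset.mem_univ i)).symm
        rw [hj]
        ring
      have hdiv : Num z / S z - A i i = N z / S z := by
        rw [hnum]
        field_simp
        ring
      rw [hdiv, sq_abs, div_pow] at hz
      simp only [hB1def, Set.mem_setOf_eq]
      exact (lt_div_iff₀ (by positivity)).mp hz
  -- B0 is null
  have hB0 : μT B0 = 0 := by
    have hset : B0 = Set.univ.pi
        (fun p : Fin s × Fin n => if p = (k0, i) then ({0} : Set ℝ) else Set.univ) := by
      ext z
      simp only [hB0def, Set.mem_setOf_eq, Set.mem_pi, Set.mem_univ, forall_true_left]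
      constructor
      · intro h p
        by_cases hp : p = (k0, i)
        · subst hp; simp [h]
        · simp [hp]
      · intro h
        have := h (k0, i)
        simpa using this
    rw [hset, hμT, Measure.pi_pi]
    refine Finset.prod_eq_zero (Finset.mem_univ (k0, i)) ?_
    refine (gaussianReal_absolutelyContinuous 0 one_ne_zero) ?_
    simp
  -- split coordinates at column i
  set e := MeasurableEquiv.piEquivPiSubtypeProd (fun _ : Fin s × Fin n => ℝ)
    (fun p => p.2 = i) with he
  have hMP := measurePreserving_piEquivPiSubtypeProd
    (fun _ : Fin s × Fin n => gaussianReal 0 1) (fun p : Fin s × Fin n => p.2 = i)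
  set μX : Measure ({p : Fin s × Fin n // p.2 = i} → ℝ) :=
    Measure.pi fun _ => gaussianReal 0 1 with hμX
  set μW : Measure ({p : Fin s × Fin n // ¬p.2 = i} → ℝ) :=
    Measure.pi fun _ => gaussianReal 0 1 with hμW
  haveI : IsProbabilityMeasure μX := by rw [hμX]; infer_instance
  haveI : IsProbabilityMeasure μW := by rw [hμW]; infer_instance
  have hsymm : ∀ (xw : ({p : Fin s × Fin n // p.2 = i} → ℝ) ×
      ({p : Fin s × Fin n // ¬p.2 = i} → ℝ)) (pp : Fin s × Fin n),
      e.symm xw pp = if h : pp.2 = i then xw.1 ⟨pp, h⟩ else xw.2 ⟨pp, h⟩ :=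
    fun xw pp => rfl
  -- the equivalences used for reindexing
  set eX : Fin s ≃ {p : Fin s × Fin n // p.2 = i} :=
    { toFun := fun k => ⟨(k, i), rfl⟩
      invFun := fun q => q.1.1
      left_inv := fun k => rfl
      right_inv := fun q => Subtype.ext (Prod.ext rfl q.2.symm) } with heX
  set eW : Fin s × {j : Fin n // ¬j = i} ≃ {p : Fin s × Fin n // ¬p.2 = i} :=
    { toFun := fun kj => ⟨(kj.1, kj.2.1), kj.2.2⟩
      invFun := fun q => (q.1.1, ⟨q.1.2, q.2⟩)
      left_inv := fun kj => rfl
      right_inv := fun q => rfl } with heW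
  set S' : ({p : Fin s × Fin n // p.2 = i} → ℝ) → ℝ :=
    fun x => ∑ k, x ⟨(k, i), rfl⟩ ^ 2 with hS'
  have hS'nonneg : ∀ x, 0 ≤ S' x := fun x => Finset.sum_nonneg fun k _ => sq_nonneg _
  set aa : ({p : Fin s × Fin n // p.2 = i} → ℝ) → {p : Fin s × Fin n // ¬p.2 = i} → ℝ :=
    fun x q => x ⟨(q.1.1, i), rfl⟩ * A i q.1.2 with haa
  have hSsymm : ∀ x w, S (e.symm (x, w)) = S' x := by
    intro x w
    simp only [hS, hS']
    refine Finset.sum_congr rfl fun k _ => ?_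
    rw [hsymm (x, w) (k, i)]
    simp
  have claimN : ∀ x w, N (e.symm (x, w)) = ∑ q, aa x q * w q := by
    intro x w
    simp only [hN]
    have h1 : ∀ k : Fin s, ∑ j ∈ Finset.univ.erase i, A i j * (e.symm (x, w)) (k, j)
        = ∑ j' : {j : Fin n // ¬j = i}, A i j'.1 * w ⟨(k, j'.1), j'.2⟩ := by
      intro k
      rw [Finset.sum_subtype (Finset.univ.erase i) (p := fun j => ¬j = i)
        (fun j => ⟨fun h => (Finset.mem_erase.mp h).1,
          fun h => Finset.mem_erase.mpr ⟨h, Finset.mem_univ j⟩⟩)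
        (fun j => A i j * (e.symm (x, w)) (k, j))]
      refine Finset.sum_congr rfl fun j' _ => ?_
      congr 1
      rw [hsymm (x, w) (k, j'.1), dif_neg j'.2]
    calc ∑ k, (e.symm (x, w)) (k, i) * ∑ j ∈ Finset.univ.erase i, A i j * (e.symm (x, w)) (k, j)
        = ∑ k, ∑ j' : {j : Fin n // ¬j = i},
            (x ⟨(k, i), rfl⟩ * A i j'.1) * w ⟨(k, j'.1), j'.2⟩ := by
          refine Finset.sum_congr rfl fun k _ => ?_
          rw [h1 k, hsymm (x, w) (k, i), dif_pos rfl, Finset.mul_sum]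
          refine Finset.sum_congr rfl fun j' _ => ?_
          ring
      _ = ∑ kj : Fin s × {j : Fin n // ¬j = i}, aa x (eW kj) * w (eW kj) := by
          rw [Fintype.sum_prod_type]
          rfl
      _ = ∑ q, aa x q * w q := Fintype.sum_equiv eW _ _ (fun kj => rfl)
  have claimQ : ∀ x, ∑ q, aa x q ^ 2 = c * S' x := by
    intro x
    have h2 : ∑ q, aa x q ^ 2
        = ∑ kj : Fin s × {j : Fin n // ¬j = i}, aa x (eW kj) ^ 2 :=
      (Fintype.sum_equiv eW (fun kj => aa x (eW kj) ^ 2) _ (fun kj => rfl)).symm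
    rw [h2, Fintype.sum_prod_type]
    have h3 : ∀ k : Fin s, ∑ j' : {j : Fin n // ¬j = i}, aa x (eW (k, j')) ^ 2
        = x ⟨(k, i), rfl⟩ ^ 2 * ∑ j' : {j : Fin n // ¬j = i}, A i j'.1 ^ 2 := by
      intro k
      rw [Finset.mul_sum]
      refine Finset.sum_congr rfl fun j' _ => ?_
      change (x ⟨(k, i), rfl⟩ * A i j'.1) ^ 2 = _
      rw [mul_pow]
    simp_rw [h3]
    rw [← Finset.sum_mul]
    have hcsub : ∑ j' : {j : Fin n // ¬j = i}, A i j'.1 ^ 2 = c := by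
      rw [hcerase]
      refine (Finset.sum_subtype (Finset.univ.erase i) (fun j => ?_)
        (fun j => A i j ^ 2)).symm
      constructor
      · exact fun h => (Finset.mem_erase.mp h).1
      · exact fun h => Finset.mem_erase.mpr ⟨h, Finset.mem_univ j⟩
    rw [hcsub, mul_comm]
  -- section bound
  have hsec : ∀ x, μW {w | ε ^ 2 * c * S' x ^ 2 < (∑ q, aa x q * w q) ^ 2}
      ≤ ENNReal.ofReal (2 * Real.exp (-(ε ^ 2 / 2 * S' x))) := by
    intro x
    by_cases hQ : 0 < ∑ q, aa x q ^ 2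
    · have hcS : 0 < c * S' x := claimQ x ▸ hQ
      have hcpos : 0 < c := by
        rcases lt_or_eq_of_le hcnonneg with h | h
        · exact h
        · exfalso; rw [← h, zero_mul] at hcS; exact lt_irrefl _ hcS
      have hS'pos : 0 < S' x := by
        rcases lt_or_eq_of_le (hS'nonneg x) with h | h
        · exact h
        · exfalso; rw [← h, mul_zero] at hcS; exact lt_irrefl _ hcS
      set t : ℝ := ε * Real.sqrt c * S' x with ht
      have htpos : 0 < t := by
        have := Real.sqrt_pos.mpr hcpos
        positivity
      have ht2 : t ^ 2 = ε ^ 2 * c * S' x ^ 2 := by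
        rw [ht, mul_pow, mul_pow, Real.sq_sqrt hcpos.le]
      refine le_trans (measure_mono ?_)
        (le_trans (gde_chernoff_abs (aa x) t htpos hQ) ?_)
      · intro w hw
        simp only [Set.mem_setOf_eq] at hw ⊢
        by_contra hcon
        push_neg at hcon
        have h1 : (∑ q, aa x q * w q) ^ 2 < t ^ 2 := by
          rw [← sq_abs]
          exact pow_lt_pow_left₀ hcon (abs_nonneg _) (by norm_num)
        rw [ht2] at h1
        linarith
      · apply ENNReal.ofReal_le_ofReal
        have harg : -t ^ 2 / (2 * ∑ q, aa x q ^ 2) = -(ε ^ 2 / 2 * S' x) := by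
          rw [ht2, claimQ x]
          field_simp
        rw [harg]
    · have hzero : ∀ q, aa x q = 0 := by
        push_neg at hQ
        have h0 : ∑ q, aa x q ^ 2 = 0 :=
          le_antisymm hQ (Finset.sum_nonneg fun q _ => sq_nonneg _)
        intro q
        have h1 := (Finset.sum_eq_zero_iff_of_nonneg
          (fun q _ => sq_nonneg (aa x q))).mp h0 q (Finset.mem_univ q)
        exact pow_eq_zero_iff (by norm_num) |>.mp h1
      have hempty : {w : {p : Fin s × Fin n // ¬p.2 = i} → ℝ |
          ε ^ 2 * c * S' x ^ 2 < (∑ q, aa x q * w q) ^ 2} = ∅ := by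
        ext w
        simp only [Set.mem_setOf_eq, Set.mem_empty_iff_false, iff_false, not_lt]
        have h1 : ∑ q, aa x q * w q = 0 :=
          Finset.sum_eq_zero fun q _ => by rw [hzero q, zero_mul]
        rw [h1]
        simpa using mul_nonneg (mul_nonneg (sq_nonneg ε) hcnonneg) (sq_nonneg (S' x))
      rw [hempty]
      simp
  -- bound on B1
  have hB1bound : μT B1 ≤
      ENNReal.ofReal (2 * Real.sqrt ((1 + ε ^ 2)⁻¹) ^ s) := by
    have hpre : MeasurableSet (e.symm ⁻¹' B1) := e.symm.measurable hB1meas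
    have h1 : μT B1 = (μX.prod μW) (e.symm ⁻¹' B1) := by
      rw [← hMP.map_eq, Measure.map_apply e.measurable hpre]
      congr 1
      ext z
      simp [Set.mem_preimage]
    rw [h1, Measure.prod_apply hpre]
    have h2 : ∀ x, Prod.mk x ⁻¹' (e.symm ⁻¹' B1)
        = {w | ε ^ 2 * c * S' x ^ 2 < (∑ q, aa x q * w q) ^ 2} := by
      intro x
      ext w
      simp only [Set.mem_preimage, hB1def, Set.mem_setOf_eq, hSsymm x w, claimN x w]
    calc ∫⁻ x, μW (Prod.mk x ⁻¹' (e.symm ⁻¹' B1)) ∂μX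
        ≤ ∫⁻ x, ENNReal.ofReal (2 * Real.exp (-(ε ^ 2 / 2 * S' x))) ∂μX := by
          refine lintegral_mono fun x => ?_
          rw [h2 x]
          exact hsec x
      _ = ENNReal.ofReal 2 * ∫⁻ x, ENNReal.ofReal (Real.exp (-(ε ^ 2 / 2 * S' x))) ∂μX := by
          simp_rw [ENNReal.ofReal_mul (by norm_num : (0:ℝ) ≤ 2)]
          have hS'meas : Measurable S' := by
            rw [hS']
            exact Finset.measurable_sum _ fun k _ => (measurable_pi_apply _).pow_const 2
          rw [lintegral_const_mul (ENNReal.ofReal 2)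
            (show Measurable fun x => ENNReal.ofReal (Real.exp (-(ε ^ 2 / 2 * S' x))) from
              ENNReal.measurable_ofReal.comp
                (Real.measurable_exp.comp (hS'meas.const_mul (ε ^ 2 / 2)).neg))]
      _ = ENNReal.ofReal 2 * (ENNReal.ofReal (Real.sqrt ((1 + ε ^ 2)⁻¹))) ^ s := by
          congr 1
          have h3 : ∀ x : {p : Fin s × Fin n // p.2 = i} → ℝ,
              ENNReal.ofReal (Real.exp (-(ε ^ 2 / 2 * S' x)))
              = ∏ q, ENNReal.ofReal (Real.exp (-(ε ^ 2 / 2 * (x q) ^ 2))) := by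
            intro x
            have h4 : S' x = ∑ q, (x q) ^ 2 :=
              Fintype.sum_equiv eX _ _ (fun k => rfl)
            rw [h4, Finset.mul_sum, ← Finset.sum_neg_distrib, Real.exp_sum,
              ENNReal.ofReal_prod_of_nonneg (fun q _ => (Real.exp_pos _).le)]
          simp_rw [h3]
          rw [hμX, gde_lintegral_pi_prod
            (fun q x => ENNReal.ofReal (Real.exp (-(ε ^ 2 / 2 * x ^ 2))))
            (fun q => by fun_prop)]
          have h5 : ∫⁻ y, ENNReal.ofReal (Real.exp (-(ε ^ 2 / 2 * y ^ 2)))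
              ∂(gaussianReal 0 1) = ENNReal.ofReal (Real.sqrt ((1 + ε ^ 2)⁻¹)) := by
            rw [gde_laplace_sq_gauss (ε ^ 2 / 2) (by positivity),
              show (1:ℝ) + 2 * (ε ^ 2 / 2) = 1 + ε ^ 2 from by ring]
          simp_rw [h5]
          rw [Finset.prod_const, Finset.card_univ,
            show Fintype.card {p : Fin s × Fin n // p.2 = i} = s from by
              rw [← Fintype.card_congr eX, Fintype.card_fin]]
      _ = ENNReal.ofReal (2 * Real.sqrt ((1 + ε ^ 2)⁻¹) ^ s) := by
          rw [ENNReal.ofReal_mul (by norm_num : (0:ℝ) ≤ 2),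
            ENNReal.ofReal_pow (Real.sqrt_nonneg _)]
  -- put it together
  have hEc : μT Eᶜ ≤ ENNReal.ofReal δ := by
    calc μT Eᶜ ≤ μT (B0 ∪ B1) := measure_mono hsubset
      _ ≤ μT B0 + μT B1 := measure_union_le _ _
      _ = μT B1 := by rw [hB0, zero_add]
      _ ≤ ENNReal.ofReal (2 * Real.sqrt ((1 + ε ^ 2)⁻¹) ^ s) := hB1bound
      _ ≤ ENNReal.ofReal δ :=
          ENNReal.ofReal_le_ofReal (gde_numeric hε0 hε1 hδ0 hδ1 hquery)
  calc ENNReal.ofReal (1 - δ) = 1 - ENNReal.ofReal δ := by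
        rw [ENNReal.ofReal_sub _ hδ0.le, ENNReal.ofReal_one]
    _ ≤ 1 - μT Eᶜ := tsub_le_tsub_left hEc 1
    _ = μT E := by
        rw [prob_compl_eq_one_sub hEmeas,
          ENNReal.sub_sub_cancel ENNReal.one_ne_top prob_le_one]
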